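/- For every k ≥ 1 and every strongly Σₖᵖ-immune set A: the disjoint union A ⊕ A = {x0 : x ∈ A} ∪ {x1 : x ∈ A} is infinite and h-P-m-reducible to A, but A ⊕ A is not strongly Σₖᵖ-immune. Consequently, if a strongly Σₖᵖ-immune set exists, then the class of all strongly Σₖᵖ-immune sets is not closed downward under h-P-m-reductions on infinite sets. -/

import Mathlib

set_option linter.unreachableTactic false
set_option linter.unusedTactic false
set_option linter.unnecessarySeqFocus false


/-! Common definitions for resource-bounded immunity and simplicity. -/

open Computability Turing

/-- Binary strings. -/
abbrev Str : Type := List Bool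

/-- Self-delimiting encoding of a single string (double each bit, end marker `[false, true]`). -/
def encStr (x : Str) : Str := (x.map fun b => [b, b]).foldr (· ++ ·) [] ++ [false, true]

/-- A fixed polynomial-time computable and invertible encoding of finite tuples of strings. -/
def encodeTuple (l : List Str) : Str := (l.map encStr).foldr (· ++ ·) []

/-- The identity `FinEncoding` of binary strings over alphabet `Bool`. -/
def strEnc : Computability.Encoding Str Bool where
  encode := id
  decode := fun l => some l
  decode_encode := fun _ => rfl

/-- Encoding of `Bool`. -/
def boolEnc : Computability.Encoding Bool Bool := Computability.encodingBoolBool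

open scoped Classical in
/-- Characteristic function of a language. -/
noncomputable def chi (A : Set Str) (x : Str) : Bool := decide (x ∈ A)

/-- A language is in `P` if its characteristic function is computable in polynomial time. -/
def InP (A : Set Str) : Prop := Nonempty (Turing.TM2ComputableInPolyTime strEnc.encode boolEnc.encode (chi A))

/-- `FP`: total string functions computable in polynomial time. -/
def FP (f : Str → Str) : Prop := Nonempty (Turing.TM2ComputableInPolyTime strEnc.encode strEnc.encode f)

/-- A (k+1)-ary relation on strings is polynomial-time decidable if some polynomial-time
computable function decides it on encoded tuples. -/
def PTimeRel (R : Str → List Str → Bool) : Prop :=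
  ∃ g : Str → Bool, Nonempty (Turing.TM2ComputableInPolyTime strEnc.encode boolEnc.encode g) ∧
    ∀ x l, g (encodeTuple (x :: l)) = R x l

/-- Alternating bounded quantifiers: `altSat k true m P` means
`∃ y₁ ∀ y₂ ⋯ Q y_k, P [y₁,…,y_k]` with all `|yᵢ| ≤ m`. -/
def altSat : ℕ → Bool → ℕ → (List Str → Prop) → Prop
  | 0, _, _, P => P []
  | k + 1, true, m, P => ∃ y : Str, y.length ≤ m ∧ altSat k false m (fun l => P (y :: l))
  | k + 1, false, m, P => ∀ y : Str, y.length ≤ m → altSat k true m (fun l => P (y :: l))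

/-- The class `Σₖᵖ` of the polynomial hierarchy (`NP = SigmaP 1`). -/
def SigmaP (k : ℕ) : Set (Set Str) :=
  {L | ∃ p : Polynomial ℕ, ∃ R : Str → List Str → Bool, PTimeRel R ∧
    ∀ x, x ∈ L ↔ altSat k true (p.eval x.length) (fun l => R x l = true)}

/-- `C`-immunity for an arbitrary class `C` of languages. -/
def Immune (C : Set (Set Str)) (S : Set Str) : Prop :=
  S.Infinite ∧ ∀ T, T ⊆ S → T ∈ C → T.Finite

/-- `Σₖᵖ`-immune sets. -/
def SigmaImmune (k : ℕ) (S : Set Str) : Prop := Immune (SigmaP k) S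

/-- `Σₖᵖ`-simple sets. -/
def SigmaSimple (k : ℕ) (S : Set Str) : Prop := S ∈ SigmaP k ∧ SigmaImmune k Sᶜ

/-- Polynomially bounded partial function. -/
def PolyBounded (f : Str → Option Str) : Prop :=
  ∃ p : Polynomial ℕ, ∀ x y, f x = some y → y.length ≤ p.eval x.length

/-- The graph of a partial function, as a set of encoded pairs. -/
def SVGraph (f : Str → Option Str) : Set Str :=
  {z | ∃ x y, f x = some y ∧ z = encodeTuple [x, y]}

/-- `ΣₖSV`: single-valued partial functions, polynomially bounded, with graph in `Σₖᵖ`. -/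
def SigmaSV (k : ℕ) (f : Str → Option Str) : Prop :=
  PolyBounded f ∧ SVGraph f ∈ SigmaP k

/-- A `Σₖᵖ`-m-quasireduction from `A` to `B`. -/
def QuasiRed (k : ℕ) (f : Str → Option Str) (A B : Set Str) : Prop :=
  SigmaSV k f ∧ {x | f x ≠ none}.Infinite ∧ ∀ x y, f x = some y → (x ∈ A ↔ y ∈ B)

/-- Order on strings: first by length, then lexicographically. -/
def StrLt (x y : Str) : Prop :=
  x.length < y.length ∨ (x.length = y.length ∧ List.Lex (· < ·) x y)

def StrLe (x y : Str) : Prop := StrLt x y ∨ x = y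

/-- Strongly `Σₖᵖ`-immune sets: every quasireduction from `S` is almost one-to-one on `S`. -/
def StronglySigmaImmune (k : ℕ) (S : Set Str) : Prop :=
  S.Infinite ∧ ∀ B : Set Str, ∀ f : Str → Option Str, QuasiRed k f S B →
    {p : Str × Str | p.1 ∈ S ∧ p.2 ∈ S ∧ f p.1 ≠ none ∧ f p.2 ≠ none ∧
      StrLt p.1 p.2 ∧ f p.1 = f p.2}.Finite

/-- Honest total function: `|x| ≤ p(|f(x)|)`. -/
def Honest (f : Str → Str) : Prop := ∃ p : Polynomial ℕ, ∀ x, x.length ≤ p.eval (f x).length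

/-- Honest polynomial-time many-one reduction. -/
def HPmRed (A B : Set Str) : Prop :=
  ∃ f : Str → Str, FP f ∧ Honest f ∧ ∀ x, x ∈ A ↔ f x ∈ B

/-- Honest injective polynomial-time many-one (1-) reduction. -/
def HP1Red (A B : Set Str) : Prop :=
  ∃ f : Str → Str, FP f ∧ Honest f ∧ Function.Injective f ∧ ∀ x, x ∈ A ↔ f x ∈ B

/-- The map `x ↦ ⟨F x⟩` is polynomial-time computable. -/
def TupleFP (F : Str → List Str) : Prop := FP (fun x => encodeTuple (F x))

/-- Componentwise honest tuple function. -/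
def CwHonest (F : Str → List Str) : Prop :=
  ∃ p : Polynomial ℕ, ∀ x, ∀ y ∈ F x, x.length ≤ p.eval y.length

/-- Honest polynomial-time conjunctive reduction. -/
def HPcRed (A B : Set Str) : Prop :=
  ∃ F : Str → List Str, TupleFP F ∧ (∀ x, F x ≠ []) ∧ CwHonest F ∧
    ∀ x, x ∈ A ↔ ∀ y ∈ F x, y ∈ B

/-- Honest polynomial-time disjunctive reduction. -/
def HPdRed (A B : Set Str) : Prop :=
  ∃ F : Str → List Str, TupleFP F ∧ (∀ x, F x ≠ []) ∧ CwHonest F ∧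
    ∀ x, x ∈ A ↔ ∃ y ∈ F x, y ∈ B

/-! Forcing conditions and genericity. -/

/-- A forcing condition: a finite partial function from strings to bits, represented
canonically as a list of (string, value) pairs with strictly increasing keys. -/
abbrev Cond : Type := List (Str × Bool)

/-- Well-formedness: the domain is listed in strictly increasing order. -/
def WFCond (σ : Cond) : Prop := List.Pairwise (fun a b => StrLt a.1 b.1) σ

/-- Encoding of a condition as a string: the list of its domain in increasing order
together with the corresponding values. -/
def encodeCond (σ : Cond) : Str :=
  encodeTuple [encodeTuple (σ.map Prod.fst), σ.map Prod.snd]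

/-- `τ` extends `σ`. -/
def CondExt (σ τ : Cond) : Prop := ∀ p ∈ σ, p ∈ τ

/-- A set `A` extends a condition `σ`. -/
def SetExt (A : Set Str) (σ : Cond) : Prop := ∀ p ∈ σ, (p.1 ∈ A ↔ p.2 = true)

/-- A set `S` of conditions is dense along `A`. -/
def DenseAlong (S : Set Cond) (A : Set Str) : Prop :=
  ∀ σ, WFCond σ → SetExt A σ → ∃ τ ∈ S, WFCond τ ∧ CondExt σ τ

/-- `A` meets a set `S` of conditions. -/
def Meets (A : Set Str) (S : Set Cond) : Prop := ∃ σ ∈ S, WFCond σ ∧ SetExt A σ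

/-- `Σₖᵖ`-generic sets. -/
def SigmaGeneric (k : ℕ) (A : Set Str) : Prop :=
  ∀ S : Set Cond, {z | ∃ σ ∈ S, WFCond σ ∧ z = encodeCond σ} ∈ SigmaP k →
    DenseAlong S A → Meets A S

/-! Arrays and hyperimmunity. -/

/-- `(f, D)` is a `Σₖᵖ`-array: `f ∈ ΣₖSV` has infinite domain and, on its domain,
`f s` is the canonical encoding of the finite nonempty set `D s`
(listed in increasing order); off the domain, `D s = ∅`. -/
def IsSigmaArray (k : ℕ) (f : Str → Option Str) (D : Str → List Str) : Prop :=
  SigmaSV k f ∧ {s | f s ≠ none}.Infinite ∧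
    (∀ s, f s ≠ none →
      D s ≠ [] ∧ List.Pairwise StrLt (D s) ∧ f s = some (encodeTuple (D s))) ∧
    (∀ s, f s = none → D s = [])

/-- Honest array: componentwise honest supporting function. -/
def ArrayHonest (f : Str → Option Str) (D : Str → List Str) : Prop :=
  ∃ q : Polynomial ℕ, ∀ s, f s ≠ none → ∀ x ∈ D s, s.length ≤ q.eval x.length

/-- Eventually disjoint array. -/
def ArrayEvDisjoint (f : Str → Option Str) (D : Str → List Str) : Prop :=
  ∀ x, f x ≠ none → ∃ y, f y ≠ none ∧ StrLe x y ∧ (∀ a ∈ D x, a ∉ D y) ∧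
    (∀ a ∈ D x, ∀ b ∈ D y, StrLt a b)

/-- The array intersects `X`. -/
def ArrayIntersects (f : Str → Option Str) (D : Str → List Str) (X : Set Str) : Prop :=
  ∀ s, f s ≠ none → ∃ x ∈ D s, x ∈ X

/-- Honestly `Σₖᵖ`-hyperimmune sets. -/
def HonestlySigmaHyperimmune (k : ℕ) (S : Set Str) : Prop :=
  S.Infinite ∧ ¬ ∃ f D, IsSigmaArray k f D ∧ ArrayHonest f D ∧
    ArrayEvDisjoint f D ∧ ArrayIntersects f D S

/-! Selectivity. -/

/-- Total functions in `ΣₖSV`. -/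
def SigmaSVt (k : ℕ) (g : Str → Str) : Prop := SigmaSV k (fun x => some (g x))

/-- `ΣₖSVₜ`-selective sets. -/
def SVtSelective (k : ℕ) (S : Set Str) : Prop :=
  ∃ f : Str → Str → Str,
    (∃ g : Str → Str, SigmaSVt k g ∧ ∀ x y, g (encodeTuple [x, y]) = f x y) ∧
    ∀ x y, (f x y = x ∨ f x y = y) ∧ (({x, y} : Set Str) ∩ S ≠ ∅ → f x y ∈ S)

/-- `P`-selective sets. -/
def PSelective (S : Set Str) : Prop :=
  ∃ f : Str → Str → Str,
    (∃ g : Str → Str, FP g ∧ ∀ x y, g (encodeTuple [x, y]) = f x y) ∧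
    ∀ x y, (f x y = x ∨ f x y = y) ∧ (({x, y} : Set Str) ∩ S ≠ ∅ → f x y ∈ S)

/-! Exponential and subexponential time. -/

/-- A language is in `EXP` if its characteristic function is computable
within time `2^(n^c + c)` for some `c`. -/
def InEXP (A : Set Str) : Prop :=
  ∃ c : ℕ, ∃ h : Turing.TM2ComputableInTime strEnc.encode boolEnc.encode (chi A),
    ∀ n, h.time n ≤ 2 ^ (n ^ c + c)

/-- A language is in `SUBEXP` if for every `c ≥ 1` its characteristic function is
computable within time `2^(n^(1/c))`. -/
def InSUBEXP (A : Set Str) : Prop :=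
  ∀ c : ℕ, 1 ≤ c → ∃ h : Turing.TM2ComputableInTime strEnc.encode boolEnc.encode (chi A),
    ∀ n, (h.time n : ℝ) ≤ 2 ^ ((n : ℝ) ^ (1 / (c : ℝ)))

/-- The alternating tower: `2̂₀ = 1`, `2̂_{n+1} = 2^(2^(2̂ₙ))`. -/
def towHat : ℕ → ℕ
  | 0 => 1
  | n + 1 => 2 ^ (2 ^ towHat n)

/-! Truth-table style reductions. -/

/-- Polynomial-time computability of a truth-table evaluator `α : Σ* × {0,1} → {0,1}`
(on encoded pairs). -/
def FPEval1 (α : Str → Bool → Bool) : Prop :=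
  ∃ g : Str → Str, FP g ∧ ∀ x b, g (encodeTuple [x, [b]]) = [α x b]

/-- Polynomial-time computability of `α : Σ* × {0,1}² → {0,1}` (on encoded tuples). -/
def FPEval2 (α : Str → Bool → Bool → Bool) : Prop :=
  ∃ g : Str → Str, FP g ∧ ∀ x b₁ b₂, g (encodeTuple [x, [b₁, b₂]]) = [α x b₁ b₂]

/-- `P`-1tt-reduction from `A` to `B` via `(f, α)`. -/
def P1ttRed (A B : Set Str) : Prop :=
  ∃ f : Str → Str, ∃ α : Str → Bool → Bool, FP f ∧ FPEval1 α ∧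
    ∀ x, x ∈ A ↔ α x (chi B (f x)) = true

/-- Honest `P`-1tt-reduction. -/
def HP1ttRed (A B : Set Str) : Prop :=
  ∃ f : Str → Str, ∃ α : Str → Bool → Bool, FP f ∧ FPEval1 α ∧ Honest f ∧
    ∀ x, x ∈ A ↔ α x (chi B (f x)) = true

/-! Almost immunity, levelability, and the operator `U`. -/

/-- Almost `C`-immune: union of a set in `C` and a `C`-immune set. -/
def AlmostImmune (C : Set (Set Str)) (S : Set Str) : Prop :=
  ∃ A ∈ C, ∃ B, Immune C B ∧ S = A ∪ B

/-- The class `P`. -/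
def Pclass : Set (Set Str) := {A | InP A}

/-- `P`-levelable: infinite and not almost `P`-immune. -/
def PLevelable (S : Set Str) : Prop := S.Infinite ∧ ¬ AlmostImmune Pclass S

/-- Almost `Σₖᵖ`-simple sets. -/
def AlmostSigmaSimple (k : ℕ) (S : Set Str) : Prop :=
  S.Infinite ∧ S ∈ SigmaP k ∧
    ∃ A ∈ SigmaP k, ∃ B, Immune (SigmaP k) B ∧ Sᶜ = A ∪ B ∧ (B \ A).Infinite

/-- `Σₖᵖ`-pseudosimple sets. -/
def SigmaPseudosimple (k : ℕ) (S : Set Str) : Prop :=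
  ∃ A : Set Str, A.Infinite ∧ A ∈ SigmaP k ∧ A ⊆ Sᶜ ∧ SigmaSimple k (S ∪ A)

/-- The unambiguity operator `U` on a class `C`. -/
def UClass (C : Set (Set Str)) : Set (Set Str) :=
  {A | ∃ f : Str → Option Str, PolyBounded f ∧ A = {x | f x ≠ none} ∧ SVGraph f ∈ C}

namespace Aux
open Turing.TM2.Stmt

/-- Reachability with step bound. -/
def Reach (tm : FinTM2) (n : ℕ) (c d : tm.Cfg) : Prop :=
  ∃ m ≤ n, (flip bind tm.step)^[m] (some c) = some d

theorem Reach.refl (tm : FinTM2) (n : ℕ) (c : tm.Cfg) : Reach tm n c c :=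
  ⟨0, Nat.zero_le _, rfl⟩

theorem Reach.head {tm : FinTM2} {n : ℕ} {c c' d : tm.Cfg}
    (h : TM2.step tm.m c = @some (TM2.Cfg tm.Γ tm.Λ tm.σ) c') (h2 : Reach tm n c' d) : Reach tm (n+1) c d := by
  obtain ⟨m, hm, hit⟩ := h2
  refine ⟨m+1, by omega, ?_⟩
  rw [Function.iterate_succ_apply]
  have e : (flip bind tm.step) (some c) = some c' := h
  rw [e]; exact hit

theorem Reach.mono {tm : FinTM2} {n n' : ℕ} {c d : tm.Cfg}
    (h : Reach tm n c d) (hle : n ≤ n') : Reach tm n' c d := by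
  obtain ⟨m, hm, hit⟩ := h; exact ⟨m, le_trans hm hle, hit⟩

/-- three stacks -/
def stk3 (a b c : List Bool) : Fin 3 → List Bool := ![a, b, c]

@[simp] theorem stk3_zero (a b c : List Bool) : stk3 a b c 0 = a := rfl
@[simp] theorem stk3_one (a b c : List Bool) : stk3 a b c 1 = b := rfl
@[simp] theorem stk3_two (a b c : List Bool) : stk3 a b c 2 = c := rfl

@[simp] theorem update_stk3_zero (a b c x : List Bool) :
    Function.update (stk3 a b c) 0 x = stk3 x b c := by
  funext k; fin_cases k <;> simp [stk3, Function.update]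
@[simp] theorem update_stk3_one (a b c x : List Bool) :
    Function.update (stk3 a b c) 1 x = stk3 a x c := by
  funext k; fin_cases k <;> simp [stk3, Function.update]
@[simp] theorem update_stk3_two (a b c x : List Bool) :
    Function.update (stk3 a b c) 2 x = stk3 a b x := by
  funext k; fin_cases k <;> simp [stk3, Function.update]

end Aux

namespace Aux
open Turing.TM2.Stmt

inductive L1 | main | mvA | mvB deriving DecidableEq

instance : Fintype L1 where
  elems := {.main, .mvA, .mvB}
  complete := by intro x; cases x <;> simp

def M1stmt (w : Str) : L1 → TM2.Stmt (fun _ : Fin 3 => Bool) L1 (Option Bool)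
  | .main => pop 0 (fun _ ob => ob) (branch (fun v => v.isSome)
      (push 1 (fun v => v.getD false) (goto fun _ => .mvA))
      (w.reverse.foldr (fun b q => push 2 (fun _ => b) q) halt))
  | .mvA => pop 0 (fun _ ob => ob) (branch (fun v => v.isSome)
      (push 1 (fun v => v.getD false) (goto fun _ => .mvA))
      (pop 1 (fun _ _ => none) (goto fun _ => .mvB)))
  | .mvB => pop 1 (fun _ ob => ob) (branch (fun v => v.isSome)
      (push 2 (fun v => v.getD false) (goto fun _ => .mvB))
      halt)

abbrev M1 (w : Str) : FinTM2 where
  K := Fin 3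
  k₀ := 0
  k₁ := 2
  Γ := fun _ => Bool
  Λ := L1
  main := .main
  σ := Option Bool
  initialState := none
  m := M1stmt w

theorem stepAux_pushes (l : List Bool) (q : TM2.Stmt (fun _ : Fin 3 => Bool) L1 (Option Bool))
    (v : Option Bool) (S : ∀ _ : Fin 3, List Bool) :
    TM2.stepAux (l.foldr (fun b r => push 2 (fun _ => b) r) q) v S
      = TM2.stepAux q v (Function.update S 2 (l.reverse ++ S 2)) := by
  induction l generalizing S with
  | nil => simp
  | cons b l ih =>
      simp only [List.foldr, TM2.stepAux, ih, Function.update_idem, Function.update_self,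
        List.reverse_cons, List.append_assoc, List.singleton_append]

theorem trace_mvB (w : Str) : ∀ (s o : Str) (v : Option Bool),
    Reach (M1 w) (s.length + 1) ⟨some .mvB, v, stk3 [] s o⟩
      ⟨none, none, stk3 [] [] (s.reverse ++ o)⟩ := by
  intro s
  induction s with
  | nil =>
      intro o v
      refine Reach.head ?_ (Reach.refl _ _ _)
      simp [M1, M1stmt, stk3]
  | cons b s ih =>
      intro o v
      simp only [List.reverse_cons, List.append_assoc, List.singleton_append]
      refine Reach.head ?_ ((ih (b :: o) (some b)).mono (by simp))
      simp [M1, M1stmt]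

theorem trace_mvA (w : Str) : ∀ (a s o : Str) (v : Option Bool),
    Reach (M1 w) (2 * a.length + s.length + 2) ⟨some .mvA, v, stk3 a s o⟩
      ⟨none, none, stk3 [] [] (((a.reverse ++ s).tail).reverse ++ o)⟩ := by
  intro a
  induction a with
  | nil =>
      intro s o v
      refine Reach.head ?_ ((trace_mvB w s.tail o none).mono ?_)
      · simp [M1, M1stmt]
      · simp only [List.length_tail]; omega
  | cons c a ih =>
      intro s o v
      have h := (ih (c :: s) o (some c)).mono
        (show 2 * a.length + (c :: s).length + 2 ≤ 2 * (c :: a).length + s.length + 1 by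
          simp; omega)
      rw [show a.reverse ++ (c :: s) = (c :: a).reverse ++ s by simp] at h
      exact Reach.head (by simp [M1, M1stmt]) h

theorem rev_tail_rev (z : Str) : z.reverse.tail.reverse = z.dropLast := by
  rcases z.eq_nil_or_concat with rfl | ⟨x, b, rfl⟩
  · rfl
  · simp

theorem step_main_nil (w : Str) (s o : Str) (v : Option Bool) :
    (M1 w).step ⟨some .main, v, stk3 [] s o⟩ = some ⟨none, none, stk3 [] s (w ++ o)⟩ := by
  show (TM2.step (M1stmt w) _) = _
  simp only [TM2.step, M1stmt, TM2.stepAux, stk3_zero, List.head?, List.tail_nil,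
    update_stk3_zero, Option.isSome_none, cond_false]
  rw [stepAux_pushes]
  simp
  rfl

theorem trace_main (w : Str) (z : Str) :
    Reach (M1 w) (2 * z.length + 5) ⟨some .main, none, stk3 z [] []⟩
      ⟨none, none, stk3 [] [] (if z = [] then w else z.dropLast)⟩ := by
  cases z with
  | nil =>
      rw [if_pos rfl]
      have h := Reach.head (step_main_nil w [] [] none)
        (Reach.refl (M1 w) (2 * ([] : Str).length + 4) _)
      simpa using h
  | cons c z =>
      have h := (trace_mvA w z [c] [] (some c)).mono
        (show 2 * z.length + 1 + 2 ≤ 2 * (c :: z).length + 4 by simp; omega)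
      rw [show z.reverse ++ [c] = (c :: z).reverse by simp] at h
      rw [rev_tail_rev, List.append_nil] at h
      rw [if_neg (by simp)]
      exact Reach.head (by simp [M1, M1stmt]) h

theorem initList_M1 (w z : Str) :
    initList (M1 w) z = ⟨some .main, none, stk3 z [] []⟩ := by
  refine TM2.Cfg.mk.injEq .. ▸ ?_
  refine ⟨rfl, rfl, ?_⟩
  funext (k : Fin 3)
  fin_cases k <;> simp [initList, M1, stk3]

theorem haltList_M1 (w out : Str) :
    haltList (M1 w) out = ⟨none, none, stk3 [] [] out⟩ := by
  refine TM2.Cfg.mk.injEq .. ▸ ?_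
  refine ⟨rfl, rfl, ?_⟩
  funext (k : Fin 3)
  fin_cases k <;> simp [haltList, M1, stk3]

noncomputable def M1computes (w : Str) :
    TM2ComputableInPolyTime strEnc.encode strEnc.encode (fun z => if z = [] then w else z.dropLast) where
  tm := M1 w
  inputAlphabet := Equiv.refl Bool
  outputAlphabet := Equiv.refl Bool
  time := 2 * Polynomial.X + 5
  outputsFun := fun z => by
    have h := trace_main w z
    rw [← initList_M1 w z, ← haltList_M1 w (if z = [] then w else z.dropLast)] at h
    refine ⟨⟨h.choose, ?_⟩, ?_⟩
    · have goal := h.choose_spec.2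
      simp only [strEnc]
      have e : ∀ l : List Bool, List.map (Equiv.refl Bool).invFun l = l := fun l => by simp
      show (flip bind (M1 w).step)^[h.choose]
          (some (initList (M1 w) (List.map (Equiv.refl Bool).invFun z)))
          = some (haltList (M1 w)
              (List.map (Equiv.refl Bool).invFun (if z = [] then w else z.dropLast)))
      rw [e, e]
      exact goal
    · refine le_trans h.choose_spec.1 ?_
      simp [strEnc]

/-! ### The verifier machine M2 -/

inductive L2 | lz | lcmp | lrej | lout (b : Bool) deriving DecidableEq

instance : Fintype L2 where
  elems := {.lz, .lcmp, .lrej, .lout false, .lout true}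
  complete := by intro x; rcases x with _ | _ | _ | ⟨_ | _⟩ <;> simp

abbrev Stmt2 := TM2.Stmt (fun _ : Fin 3 => Bool) L2 (Option Bool)

def popI (qn qf qt : Stmt2) : Stmt2 :=
  pop 0 (fun _ ob => ob) (branch (fun v => v.isSome) (branch (fun v => v.getD false) qt qf) qn)
def popS (qn qf qt : Stmt2) : Stmt2 :=
  pop 1 (fun _ ob => ob) (branch (fun v => v.isSome) (branch (fun v => v.getD false) qt qf) qn)
def rj : Stmt2 := goto fun _ => .lrej

def M2stmt : L2 → Stmt2
  | .lz => popI rj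
      (popI rj
        (popI rj
          (popI rj (push 1 (fun _ => false) (goto fun _ => .lz)) rj)
          (popI rj rj (popS rj (goto fun _ => .lcmp) (goto fun _ => .lcmp))))
        rj)
      (popI rj rj
        (popI rj rj
          (popI rj rj (push 1 (fun _ => true) (goto fun _ => .lz)))))
  | .lcmp => popI rj
      (popI rj
        (popI rj
          (popI rj (popS rj (goto fun _ => .lcmp) rj) rj)
          (popI rj rj
            (popS (popI rj (popI rj rj (goto fun _ => .lout true)) rj) rj rj)))
        rj)
      (popI rj rj (popI rj rj (popI rj rj (popS rj rj (goto fun _ => .lcmp)))))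
  | .lrej => popS (goto fun _ => .lout false) (goto fun _ => .lrej) (goto fun _ => .lrej)
  | .lout b => popI (push 2 (fun _ => b) halt) (goto fun _ => .lout b) (goto fun _ => .lout b)

abbrev M2 : FinTM2 where
  K := Fin 3
  k₀ := 0
  k₁ := 2
  Γ := fun _ => Bool
  Λ := L2
  main := .lz
  σ := Option Bool
  initialState := none
  m := M2stmt

/-- model: final acceptance -/
def phF : Str → Bool
  | false :: true :: _ => true
  | _ => false

/-- model: comparison phase -/
def phC : Str → Str → Bool
  | c1 :: c2 :: c3 :: c4 :: r, s =>
    if c2 = c1 then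
      if c3 = c1 then
        (if c4 = c1 then
          (match s with
           | c' :: s' => if c' = c1 then phC r s' else false
           | [] => false)
         else false)
      else if c1 = false ∧ c4 = true then
        (match s with
         | [] => phF r
         | _ :: _ => false)
      else false
    else false
  | _, _ => false

/-- model: reading phase -/
def phZ : Str → Str → Bool
  | c1 :: c2 :: c3 :: c4 :: r, s =>
    if c2 = c1 then
      if c3 = c1 then (if c4 = c1 then phZ r (c1 :: s) else false)
      else if c1 = false ∧ c4 = true then
        (match s with
         | _ :: s' => phC r s'
         | [] => false)
      else false
    else false
  | _, _ => false

theorem trace_out (b : Bool) : ∀ (w : Str) (v : Option Bool),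
    Reach M2 (w.length + 1) ⟨some (.lout b), v, stk3 w [] []⟩
      ⟨none, none, stk3 [] [] [b]⟩ := by
  intro w
  induction w with
  | nil => intro v; exact Reach.head (by simp [M2, M2stmt, popI]) (Reach.refl _ _ _)
  | cons c w ih =>
      intro v
      refine Reach.head ?_ ((ih (some c)).mono (by simp))
      cases c <;> simp [M2, M2stmt, popI]

theorem trace_rej : ∀ (s w : Str) (v : Option Bool),
    Reach M2 (s.length + w.length + 2) ⟨some .lrej, v, stk3 w s []⟩
      ⟨none, none, stk3 [] [] [false]⟩ := by
  intro s
  induction s with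
  | nil =>
      intro w v
      refine Reach.head ?_ ((trace_out false w none).mono (by omega))
      simp [M2, M2stmt, popS]
  | cons c s ih =>
      intro w v
      refine Reach.head ?_ ((ih w (some c)).mono (by simp))
      cases c <;> simp [M2, M2stmt, popS]

theorem step_reach {n m : ℕ} {c c' d : M2.Cfg} (h : TM2.step M2.m c = @some (TM2.Cfg M2.Γ M2.Λ M2.σ) c')
    (h2 : Reach M2 m c' d) (hb : m + 1 ≤ n) : Reach M2 n c d :=
  (Reach.head h h2).mono hb

theorem trace_cmp : ∀ (n : ℕ) (w : Str), w.length ≤ n → ∀ (s : Str) (v : Option Bool),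
    Reach M2 (w.length + s.length + 4) ⟨some .lcmp, v, stk3 w s []⟩
      ⟨none, none, stk3 [] [] [phC w s]⟩ := by
  intro n
  induction n with
  | zero =>
      intro w hw s v
      rw [Nat.le_zero, List.length_eq_zero_iff] at hw
      subst hw
      exact step_reach (by simp [M2, M2stmt, popI, popS, rj]; try (and_intros <;> rfl)) (trace_rej _ _ _) (by simp <;> omega)
  | succ n ih =>
      intro w hw s v
      rcases w with _ | ⟨c1, _ | ⟨c2, _ | ⟨c3, _ | ⟨c4, r⟩⟩⟩⟩
      · exact step_reach (by simp [M2, M2stmt, popI, popS, rj]; try (and_intros <;> rfl)) (trace_rej _ _ _) (by simp <;> omega)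
      · cases c1
        · exact step_reach (by simp [M2, M2stmt, popI, popS, rj]; try (and_intros <;> rfl)) (trace_rej _ _ _) (by simp <;> omega)
        · exact step_reach (by simp [M2, M2stmt, popI, popS, rj]; try (and_intros <;> rfl)) (trace_rej _ _ _) (by simp <;> omega)
      · cases c1 <;> cases c2 <;>
          exact step_reach (by simp [M2, M2stmt, popI, popS, rj]; try (and_intros <;> rfl)) (trace_rej _ _ _) (by simp <;> omega)
      · cases c1 <;> cases c2 <;> cases c3 <;>
          exact step_reach (by simp [M2, M2stmt, popI, popS, rj]; try (and_intros <;> rfl)) (trace_rej _ _ _) (by simp <;> omega)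
      · cases c1
        · cases c2
          · cases c3
            · cases c4
              · rcases s with _ | ⟨c', s'⟩
                · exact step_reach (by simp [M2, M2stmt, popI, popS, rj]; try (and_intros <;> rfl)) (trace_rej _ _ _) (by simp <;> omega)
                · cases c'
                  · exact step_reach (by simp [M2, M2stmt, popI, popS, rj]; try (and_intros <;> rfl)) (ih r (by simp at hw ⊢; omega) s' (some false)) (by simp <;> omega)
                  · exact step_reach (by simp [M2, M2stmt, popI, popS, rj]; try (and_intros <;> rfl)) (trace_rej _ _ _) (by simp <;> omega)
              · exact step_reach (by simp [M2, M2stmt, popI, popS, rj]; try (and_intros <;> rfl)) (trace_rej _ _ _) (by simp <;> omega)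
            · cases c4
              · exact step_reach (by simp [M2, M2stmt, popI, popS, rj]; try (and_intros <;> rfl)) (trace_rej _ _ _) (by simp <;> omega)
              · rcases s with _ | ⟨c', s'⟩
                · rcases r with _ | ⟨d1, _ | ⟨d2, r'⟩⟩
                  · exact step_reach (by simp [M2, M2stmt, popI, popS, rj]; try (and_intros <;> rfl)) (trace_rej _ _ _) (by simp <;> omega)
                  · cases d1
                    · exact step_reach (by simp [M2, M2stmt, popI, popS, rj]; try (and_intros <;> rfl)) (trace_rej _ _ _) (by simp <;> omega)
                    · exact step_reach (by simp [M2, M2stmt, popI, popS, rj]; try (and_intros <;> rfl)) (trace_rej _ _ _) (by simp <;> omega)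
                  · cases d1
                    · cases d2
                      · exact step_reach (by simp [M2, M2stmt, popI, popS, rj]; try (and_intros <;> rfl)) (trace_rej _ _ _) (by simp <;> omega)
                      · exact step_reach (by simp [M2, M2stmt, popI, popS, rj]; try (and_intros <;> rfl)) (trace_out true r' (some true)) (by simp <;> omega)
                    · exact step_reach (by simp [M2, M2stmt, popI, popS, rj]; try (and_intros <;> rfl)) (trace_rej _ _ _) (by simp <;> omega)
                · cases c'
                  · exact step_reach (by simp [M2, M2stmt, popI, popS, rj]; try (and_intros <;> rfl)) (trace_rej _ _ _) (by simp <;> omega)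
                  · exact step_reach (by simp [M2, M2stmt, popI, popS, rj]; try (and_intros <;> rfl)) (trace_rej _ _ _) (by simp <;> omega)
          · cases c3
            · cases c4
              · exact step_reach (by simp [M2, M2stmt, popI, popS, rj]; try (and_intros <;> rfl)) (trace_rej _ _ _) (by simp <;> omega)
              · exact step_reach (by simp [M2, M2stmt, popI, popS, rj]; try (and_intros <;> rfl)) (trace_rej _ _ _) (by simp <;> omega)
            · cases c4
              · exact step_reach (by simp [M2, M2stmt, popI, popS, rj]; try (and_intros <;> rfl)) (trace_rej _ _ _) (by simp <;> omega)
              · exact step_reach (by simp [M2, M2stmt, popI, popS, rj]; try (and_intros <;> rfl)) (trace_rej _ _ _) (by simp <;> omega)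
        · cases c2
          · cases c3
            · cases c4
              · exact step_reach (by simp [M2, M2stmt, popI, popS, rj]; try (and_intros <;> rfl)) (trace_rej _ _ _) (by simp <;> omega)
              · exact step_reach (by simp [M2, M2stmt, popI, popS, rj]; try (and_intros <;> rfl)) (trace_rej _ _ _) (by simp <;> omega)
            · cases c4
              · exact step_reach (by simp [M2, M2stmt, popI, popS, rj]; try (and_intros <;> rfl)) (trace_rej _ _ _) (by simp <;> omega)
              · exact step_reach (by simp [M2, M2stmt, popI, popS, rj]; try (and_intros <;> rfl)) (trace_rej _ _ _) (by simp <;> omega)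
          · cases c3
            · cases c4
              · exact step_reach (by simp [M2, M2stmt, popI, popS, rj]; try (and_intros <;> rfl)) (trace_rej _ _ _) (by simp <;> omega)
              · exact step_reach (by simp [M2, M2stmt, popI, popS, rj]; try (and_intros <;> rfl)) (trace_rej _ _ _) (by simp <;> omega)
            · cases c4
              · exact step_reach (by simp [M2, M2stmt, popI, popS, rj]; try (and_intros <;> rfl)) (trace_rej _ _ _) (by simp <;> omega)
              · rcases s with _ | ⟨c', s'⟩
                · exact step_reach (by simp [M2, M2stmt, popI, popS, rj]; try (and_intros <;> rfl)) (trace_rej _ _ _) (by simp <;> omega)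
                · cases c'
                  · exact step_reach (by simp [M2, M2stmt, popI, popS, rj]; try (and_intros <;> rfl)) (trace_rej _ _ _) (by simp <;> omega)
                  · exact step_reach (by simp [M2, M2stmt, popI, popS, rj]; try (and_intros <;> rfl)) (ih r (by simp at hw ⊢; omega) s' (some true)) (by simp <;> omega)

set_option maxHeartbeats 1000000 in
theorem trace_z : ∀ (n : ℕ) (w : Str), w.length ≤ n → ∀ (s : Str) (v : Option Bool),
    Reach M2 (w.length + s.length + 6) ⟨some .lz, v, stk3 w s []⟩
      ⟨none, none, stk3 [] [] [phZ w s]⟩ := by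
  intro n
  induction n with
  | zero =>
      intro w hw s v
      rw [Nat.le_zero, List.length_eq_zero_iff] at hw
      subst hw
      exact step_reach (by simp [M2, M2stmt, popI, popS, rj, Bool.cond_self]; try (and_intros <;> rfl)) (trace_rej _ _ _) (by simp <;> omega)
  | succ n ih =>
      intro w hw s v
      rcases w with _ | ⟨c1, _ | ⟨c2, _ | ⟨c3, _ | ⟨c4, r⟩⟩⟩⟩
      · exact step_reach (by simp [M2, M2stmt, popI, popS, rj, Bool.cond_self]; try (and_intros <;> rfl)) (trace_rej _ _ _) (by simp <;> omega)
      · cases c1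
        · exact step_reach (by simp [M2, M2stmt, popI, popS, rj, Bool.cond_self]; try (and_intros <;> rfl)) (trace_rej _ _ _) (by simp <;> omega)
        · exact step_reach (by simp [M2, M2stmt, popI, popS, rj, Bool.cond_self]; try (and_intros <;> rfl)) (trace_rej _ _ _) (by simp <;> omega)
      · cases c1 <;> cases c2 <;>
          exact step_reach (by simp [M2, M2stmt, popI, popS, rj, Bool.cond_self]; try (and_intros <;> rfl)) (trace_rej _ _ _) (by simp <;> omega)
      · cases c1 <;> cases c2 <;> cases c3 <;>
          exact step_reach (by simp [M2, M2stmt, popI, popS, rj, Bool.cond_self]; try (and_intros <;> rfl)) (trace_rej _ _ _) (by simp <;> omega)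
      · cases c1
        · cases c2
          · cases c3
            · cases c4
              · exact step_reach (by simp [M2, M2stmt, popI, popS, rj, Bool.cond_self]; try (and_intros <;> rfl)) (ih r (by simp at hw ⊢; omega) (false :: s) (some false)) (by simp <;> omega)
              · exact step_reach (by simp [M2, M2stmt, popI, popS, rj, Bool.cond_self]; try (and_intros <;> rfl)) (trace_rej _ _ _) (by simp <;> omega)
            · cases c4
              · exact step_reach (by simp [M2, M2stmt, popI, popS, rj, Bool.cond_self]; try (and_intros <;> rfl)) (trace_rej _ _ _) (by simp <;> omega)
              · rcases s with _ | ⟨c', s'⟩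
                · exact step_reach (by simp [M2, M2stmt, popI, popS, rj, Bool.cond_self]; try (and_intros <;> rfl)) (trace_rej _ _ _) (by simp <;> omega)
                · cases c'
                  · exact step_reach (by simp [M2, M2stmt, popI, popS, rj, Bool.cond_self]; try (and_intros <;> rfl)) (trace_cmp r.length r le_rfl s' (some false)) (by simp <;> omega)
                  · exact step_reach (by simp [M2, M2stmt, popI, popS, rj, Bool.cond_self]; try (and_intros <;> rfl)) (trace_cmp r.length r le_rfl s' (some true)) (by simp <;> omega)
          · cases c3
            · cases c4
              · exact step_reach (by simp [M2, M2stmt, popI, popS, rj, Bool.cond_self]; try (and_intros <;> rfl)) (trace_rej _ _ _) (by simp <;> omega)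
              · exact step_reach (by simp [M2, M2stmt, popI, popS, rj, Bool.cond_self]; try (and_intros <;> rfl)) (trace_rej _ _ _) (by simp <;> omega)
            · cases c4
              · exact step_reach (by simp [M2, M2stmt, popI, popS, rj, Bool.cond_self]; try (and_intros <;> rfl)) (trace_rej _ _ _) (by simp <;> omega)
              · exact step_reach (by simp [M2, M2stmt, popI, popS, rj, Bool.cond_self]; try (and_intros <;> rfl)) (trace_rej _ _ _) (by simp <;> omega)
        · cases c2
          · cases c3
            · cases c4
              · exact step_reach (by simp [M2, M2stmt, popI, popS, rj, Bool.cond_self]; try (and_intros <;> rfl)) (trace_rej _ _ _) (by simp <;> omega)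
              · exact step_reach (by simp [M2, M2stmt, popI, popS, rj, Bool.cond_self]; try (and_intros <;> rfl)) (trace_rej _ _ _) (by simp <;> omega)
            · cases c4
              · exact step_reach (by simp [M2, M2stmt, popI, popS, rj, Bool.cond_self]; try (and_intros <;> rfl)) (trace_rej _ _ _) (by simp <;> omega)
              · exact step_reach (by simp [M2, M2stmt, popI, popS, rj, Bool.cond_self]; try (and_intros <;> rfl)) (trace_rej _ _ _) (by simp <;> omega)
          · cases c3
            · cases c4
              · exact step_reach (by simp [M2, M2stmt, popI, popS, rj, Bool.cond_self]; try (and_intros <;> rfl)) (trace_rej _ _ _) (by simp <;> omega)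
              · exact step_reach (by simp [M2, M2stmt, popI, popS, rj, Bool.cond_self]; try (and_intros <;> rfl)) (trace_rej _ _ _) (by simp <;> omega)
            · cases c4
              · exact step_reach (by simp [M2, M2stmt, popI, popS, rj, Bool.cond_self]; try (and_intros <;> rfl)) (trace_rej _ _ _) (by simp <;> omega)
              · exact step_reach (by simp [M2, M2stmt, popI, popS, rj, Bool.cond_self]; try (and_intros <;> rfl)) (ih r (by simp at hw ⊢; omega) (true :: s) (some true)) (by simp <;> omega)

theorem initList_M2 (z : Str) :
    initList M2 z = ⟨some .lz, none, stk3 z [] []⟩ := by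
  refine TM2.Cfg.mk.injEq .. ▸ ⟨rfl, rfl, ?_⟩
  funext (k : Fin 3)
  fin_cases k <;> simp [initList, M2, stk3]

theorem haltList_M2 (out : List Bool) :
    haltList M2 out = ⟨none, none, stk3 [] [] out⟩ := by
  refine TM2.Cfg.mk.injEq .. ▸ ⟨rfl, rfl, ?_⟩
  funext (k : Fin 3)
  fin_cases k <;> simp [haltList, M2, stk3]

noncomputable def M2computes :
    TM2ComputableInPolyTime strEnc.encode boolEnc.encode (fun v => phZ v []) where
  tm := M2
  inputAlphabet := Equiv.refl Bool
  outputAlphabet := Equiv.refl Bool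
  time := Polynomial.X + 6
  outputsFun := fun z => by
    have h := trace_z z.length z le_rfl [] none
    rw [← initList_M2 z, ← haltList_M2 [phZ z []]] at h
    refine ⟨⟨h.choose, ?_⟩, ?_⟩
    · have goal := h.choose_spec.2
      have e : ∀ l : List Bool, List.map (Equiv.refl Bool).invFun l = l := fun l => by simp
      show (flip bind M2.step)^[h.choose]
          (some (initList M2 (List.map (Equiv.refl Bool).invFun z)))
          = some (haltList M2 (List.map (Equiv.refl Bool).invFun (boolEnc.encode (phZ z []))))
      rw [e, e]
      show _ = some (haltList M2 (Computability.encodeBool (phZ z [])))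
      exact goal
    · refine le_trans h.choose_spec.1 ?_
      simp [strEnc]

/-! ### model spec -/

def dbl : Str → Str
  | [] => []
  | c :: x => c :: c :: dbl x

def qd : Str → Str
  | [] => []
  | c :: x => c :: c :: c :: c :: qd x

theorem dbl_append (x y : Str) : dbl (x ++ y) = dbl x ++ dbl y := by
  induction x with
  | nil => rfl
  | cons c x ih => simp [dbl, ih]

theorem qd_eq_dbl_dbl (x : Str) : qd x = dbl (dbl x) := by
  induction x with
  | nil => rfl
  | cons c x ih => simp [qd, dbl, ih]

theorem encStr_eq (x : Str) : encStr x = dbl x ++ [false, true] := by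
  unfold encStr
  congr 1
  induction x with
  | nil => rfl
  | cons c x ih => simp [dbl, ih]

theorem encodeTuple_cons (x : Str) (l : List Str) :
    encodeTuple (x :: l) = encStr x ++ encodeTuple l := rfl

theorem encodeTuple_pair (x y : Str) : encodeTuple [x, y] = encStr x ++ encStr y := by
  simp [encodeTuple]

theorem reverse_eq_getLast (z : Str) (h : z ≠ []) :
    z.reverse = z.getLast h :: z.dropLast.reverse := by
  conv_lhs => rw [← List.dropLast_append_getLast h]
  simp

theorem dbl_marker_inj : ∀ (a b r r' : Str),
    dbl a ++ false :: true :: r = dbl b ++ false :: true :: r' → a = b ∧ r = r' := by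
  intro a
  induction a with
  | nil =>
      intro b r r' h
      cases b with
      | nil => simpa [dbl] using h
      | cons c b => cases c <;> simp [dbl] at h
  | cons c a ih =>
      intro b r r' h
      cases b with
      | nil => cases c <;> simp [dbl] at h
      | cons c' b =>
          simp only [dbl, List.cons_append, List.cons.injEq] at h
          obtain ⟨rfl, -, h3⟩ := h
          obtain ⟨rfl, rfl⟩ := ih b r r' h3
          exact ⟨rfl, rfl⟩

theorem phZ_qd (z : Str) : ∀ (r s : Str),
    phZ (qd z ++ false :: false :: true :: true :: r) s =
      (match z.reverse ++ s with
       | [] => false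
       | _ :: s' => phC r s') := by
  induction z with
  | nil => intro r s; cases s <;> simp [qd, phZ]
  | cons c z ih =>
      intro r s
      show phZ (c :: c :: c :: c :: (qd z ++ _)) s = _
      rw [show phZ (c :: c :: c :: c :: (qd z ++ false :: false :: true :: true :: r)) s
            = phZ (qd z ++ false :: false :: true :: true :: r) (c :: s) by simp [phZ]]
      rw [ih r (c :: s)]
      have : (c :: z).reverse ++ s = z.reverse ++ (c :: s) := by simp
      rw [this]

theorem phC_qd (y : Str) : ∀ (r s : Str),
    phC (qd y ++ false :: false :: true :: true :: r) s =
      (if s = y then phF r else false) := by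
  induction y with
  | nil =>
      intro r s
      cases s with
      | nil => simp [qd, phC]
      | cons c s => simp [qd, phC]
  | cons c y ih =>
      intro r s
      show phC (c :: c :: c :: c :: (qd y ++ _)) s = _
      cases s with
      | nil => cases c <;> simp [phC]
      | cons c' s' =>
          have hred : phC (c :: c :: c :: c :: (qd y ++ false :: false :: true :: true :: r))
              (c' :: s') = (if c' = c then phC (qd y ++ false :: false :: true :: true :: r) s'
                else false) := by
            cases c <;> simp [phC]
          rw [hred]
          by_cases hc : c' = c
          · subst hc
            rw [if_pos rfl, ih r s']
            by_cases hs : s' = y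
            · simp [hs]
            · rw [if_neg hs, if_neg (by simp [hs])]
          · rw [if_neg hc, if_neg (by simp [hc])]

theorem phF_inv (w : Str) (h : phF w = true) : ∃ t, w = false :: true :: t := by
  rcases w with _ | ⟨⟨⟩, _ | ⟨⟨⟩, t⟩⟩ <;> first | exact ⟨t, rfl⟩ | simp [phF] at h

theorem phC_inv : ∀ (n : ℕ) (w : Str), w.length ≤ n → ∀ s, phC w s = true →
    ∃ r, w = qd s ++ false :: false :: true :: true :: r ∧ phF r = true := by
  intro n
  induction n with
  | zero =>
      intro w hw s h
      rw [Nat.le_zero, List.length_eq_zero_iff] at hw; subst hw; simp [phC] at h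
  | succ n ih =>
      intro w hw s h
      rcases w with _ | ⟨c1, _ | ⟨c2, _ | ⟨c3, _ | ⟨c4, r⟩⟩⟩⟩
      · simp [phC] at h
      · simp [phC] at h
      · simp [phC] at h
      · simp [phC] at h
      · cases c1 <;> cases c2 <;> cases c3 <;> cases c4 <;> simp [phC] at h
        -- 0000
        · rcases s with _ | ⟨c', s'⟩
          · simp at h
          · cases c'
            · simp only [if_pos rfl] at h
              obtain ⟨r', hr, hf⟩ := ih r (by simp at hw; omega) s' h
              exact ⟨r', by simp [qd, hr], hf⟩
            · simp at h
        -- 0011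
        · rcases s with _ | ⟨c', s'⟩
          · exact ⟨r, rfl, h⟩
          · simp at h
        -- 1111
        · rcases s with _ | ⟨c', s'⟩
          · simp at h
          · cases c'
            · simp at h
            · simp only [if_pos rfl] at h
              obtain ⟨r', hr, hf⟩ := ih r (by simp at hw; omega) s' h
              exact ⟨r', by simp [qd, hr], hf⟩

theorem phZ_inv : ∀ (n : ℕ) (w : Str), w.length ≤ n → ∀ s, phZ w s = true →
    ∃ z r, w = qd z ++ false :: false :: true :: true :: r ∧
      ∃ b s', z.reverse ++ s = b :: s' ∧ phC r s' = true := by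
  intro n
  induction n with
  | zero =>
      intro w hw s h
      rw [Nat.le_zero, List.length_eq_zero_iff] at hw; subst hw; simp [phZ] at h
  | succ n ih =>
      intro w hw s h
      rcases w with _ | ⟨c1, _ | ⟨c2, _ | ⟨c3, _ | ⟨c4, r⟩⟩⟩⟩
      · simp [phZ] at h
      · simp [phZ] at h
      · simp [phZ] at h
      · simp [phZ] at h
      · cases c1 <;> cases c2 <;> cases c3 <;> cases c4 <;> simp [phZ] at h
        -- 0000
        · obtain ⟨z', r', hr, b, s', hrev, hc⟩ := ih r (by simp at hw; omega) (false :: s) h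
          refine ⟨false :: z', r', by simp [qd, hr], b, s', ?_, hc⟩
          rw [List.reverse_cons, List.append_assoc, List.singleton_append]
          exact hrev
        -- 0011
        · rcases s with _ | ⟨b, s'⟩
          · simp at h
          · exact ⟨[], r, rfl, b, s', rfl, h⟩
        -- 1111
        · obtain ⟨z', r', hr, b, s', hrev, hc⟩ := ih r (by simp at hw; omega) (true :: s) h
          refine ⟨true :: z', r', by simp [qd, hr], b, s', ?_, hc⟩
          rw [List.reverse_cons, List.append_assoc, List.singleton_append]
          exact hrev

/-- The quasireduction function. -/
def qrf (z : Str) : Option Str := if z = [] then none else some z.dropLast.reverse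

theorem gmodel_spec (u t : Str) : phZ (encStr u ++ t) [] = true ↔ u ∈ SVGraph qrf := by
  constructor
  · intro h
    rw [encStr_eq, List.append_assoc, List.cons_append, List.cons_append, List.nil_append] at h
    obtain ⟨z, r, hw, b, s', hrev, hc⟩ := phZ_inv _ _ le_rfl _ h
    rw [List.append_nil] at hrev
    obtain ⟨r', hr, hf⟩ := phC_inv _ _ le_rfl _ hc
    obtain ⟨t1, rfl⟩ := phF_inv _ hf
    subst hr
    have key : dbl u ++ false :: true :: t
        = dbl (dbl z ++ [false, true] ++ dbl s' ++ [false, true]) ++ false :: true :: t1 := by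
      rw [hw]
      simp [dbl_append, qd_eq_dbl_dbl, dbl]
    obtain ⟨hu, -⟩ := dbl_marker_inj _ _ _ _ key
    have hzne : z ≠ [] := by
      intro hz; subst hz; simp at hrev
    have hs' : s' = z.dropLast.reverse := by
      have hg := reverse_eq_getLast z hzne
      rw [hg] at hrev
      exact (List.cons.injEq .. ▸ hrev).2.symm
    refine ⟨z, s', ?_, ?_⟩
    · simp [qrf, hzne, hs']
    · rw [hu, encodeTuple_pair, encStr_eq, encStr_eq]
      simp
  · rintro ⟨z, y, hfz, rfl⟩
    have hzne : z ≠ [] := by intro hz; simp [qrf, hz] at hfz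
    have hy : y = z.dropLast.reverse := by
      simpa [qrf, hzne] using hfz.symm
    subst hy
    have e1 : encStr (encodeTuple [z, z.dropLast.reverse]) ++ t
        = qd z ++ false :: false :: true :: true ::
            (qd z.dropLast.reverse ++ false :: false :: true :: true :: (false :: true :: t)) := by
      rw [encStr_eq, encodeTuple_pair, encStr_eq, encStr_eq]
      simp [dbl_append, qd_eq_dbl_dbl, dbl]
    rw [e1, phZ_qd z]
    have e2 : z.reverse ++ [] = z.getLast hzne :: z.dropLast.reverse := by
      rw [List.append_nil]; exact reverse_eq_getLast z hzne
    rw [e2]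
    show phC _ z.dropLast.reverse = true
    rw [phC_qd, if_pos rfl]
    rfl

theorem altSat_const (k : ℕ) : ∀ (b : Bool) (m : ℕ) (c : Prop),
    altSat k b m (fun _ => c) ↔ c := by
  induction k with
  | zero => intro b m c; cases b <;> exact Iff.rfl
  | succ k ih =>
      intro b m c
      cases b
      · constructor
        · intro h; exact (ih true m c).mp (h [] (by simp))
        · intro hc y _; exact (ih true m c).mpr hc
      · constructor
        · rintro ⟨y, _, h⟩; exact (ih false m c).mp h
        · intro hc; exact ⟨[], by simp, (ih false m c).mpr hc⟩

theorem gBool_eq (x : Str) (l : List Str) :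
    phZ (encodeTuple (x :: l)) [] = phZ (encStr x) [] := by
  have h1 := gmodel_spec x (encodeTuple l)
  have h2 := gmodel_spec x []
  rw [List.append_nil] at h2
  rw [encodeTuple_cons]
  by_cases hg : x ∈ SVGraph qrf
  · rw [h1.mpr hg, h2.mpr hg]
  · have e1 : phZ (encStr x ++ encodeTuple l) [] = false := by
      cases hv : phZ (encStr x ++ encodeTuple l) []
      · rfl
      · exact absurd (h1.mp hv) hg
    have e2 : phZ (encStr x) [] = false := by
      cases hv : phZ (encStr x) []
      · rfl
      · exact absurd (h2.mp hv) hg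
    rw [e1, e2]

theorem graph_in_SigmaP (k : ℕ) : SVGraph qrf ∈ SigmaP k := by
  refine ⟨1, fun x _ => phZ (encStr x) [],
    ⟨fun v => phZ v [], ⟨M2computes⟩, fun x l => gBool_eq x l⟩, fun x => ?_⟩
  rw [altSat_const]
  have h2 := gmodel_spec x []
  rw [List.append_nil] at h2
  exact h2.symm

theorem qrf_ne (x : Str) (y : Str) (h : qrf x = some y) : x ≠ [] := by
  intro hx; simp [qrf, hx] at h

theorem qrf_val (x : Str) (y : Str) (h : qrf x = some y) : y = x.dropLast.reverse := by
  simpa [qrf, qrf_ne x y h] using h.symm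

theorem qrf_SV (k : ℕ) : SigmaSV k qrf := by
  refine ⟨⟨Polynomial.X, fun x y h => ?_⟩, graph_in_SigmaP k⟩
  rw [qrf_val x y h]
  simp [Polynomial.eval_X]

theorem qrf_dom_inf : {x : Str | qrf x ≠ none}.Infinite := by
  apply Set.infinite_of_injective_forall_mem (f := fun x : Str => x ++ [false])
  · intro a b hab; simpa using hab
  · intro a; simp [qrf]

theorem lex_app (x : Str) : List.Lex (· < ·) (x ++ [false]) (x ++ [true]) := by
  induction x with
  | nil => exact List.Lex.rel (by decide)
  | cons c x ih => exact List.Lex.cons ih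

theorem col_inf (S T : Set Str) (hT : T.Infinite)
    (hsub : ∀ x ∈ T, x ++ [false] ∈ S ∧ x ++ [true] ∈ S) :
    {p : Str × Str | p.1 ∈ S ∧ p.2 ∈ S ∧ qrf p.1 ≠ none ∧ qrf p.2 ≠ none ∧
      StrLt p.1 p.2 ∧ qrf p.1 = qrf p.2}.Infinite := by
  have : Infinite ↥T := hT.to_subtype
  apply Set.infinite_of_injective_forall_mem
      (f := fun x : ↥T => ((x : Str) ++ [false], (x : Str) ++ [true]))
  · intro a b hab
    have h1 := congrArg Prod.fst hab
    exact Subtype.ext (by simpa using h1)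
  · rintro ⟨x, hx⟩
    exact ⟨(hsub x hx).1, (hsub x hx).2, by simp [qrf], by simp [qrf],
      Or.inr ⟨by simp, lex_app x⟩, by simp [qrf]⟩

theorem mem_AA_iff (A : Set Str) (z : Str) (hz : z ≠ []) :
    z ∈ ({z : Str | ∃ x ∈ A, z = x ++ [false]} ∪ {z : Str | ∃ x ∈ A, z = x ++ [true]}) ↔
      z.dropLast ∈ A := by
  constructor
  · rintro (⟨x, hx, rfl⟩ | ⟨x, hx, rfl⟩) <;> simpa using hx
  · intro h
    cases hb : z.getLast hz
    · left
      refine ⟨z.dropLast, h, ?_⟩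
      conv_lhs => rw [← List.dropLast_append_getLast hz]
      rw [hb]
    · right
      refine ⟨z.dropLast, h, ?_⟩
      conv_lhs => rw [← List.dropLast_append_getLast hz]
      rw [hb]

theorem nil_not_AA (A : Set Str) :
    ([] : Str) ∉ ({z : Str | ∃ x ∈ A, z = x ++ [false]} ∪
      {z : Str | ∃ x ∈ A, z = x ++ [true]}) := by
  rintro (⟨x, -, h⟩ | ⟨x, -, h⟩) <;> simp at h

theorem compl_ne (k : ℕ) (A : Set Str) (hA : StronglySigmaImmune k A) : Aᶜ.Nonempty := by
  by_contra h
  rw [Set.not_nonempty_iff_eq_empty] at h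
  have huniv : ∀ x, x ∈ A := by
    intro x
    by_contra hx
    exact (Set.eq_empty_iff_forall_notMem.mp h x) hx
  have hq : QuasiRed k qrf A Set.univ :=
    ⟨qrf_SV k, qrf_dom_inf, fun x y _ => iff_of_true (huniv x) trivial⟩
  have hfin := hA.2 Set.univ qrf hq
  exact col_inf A Set.univ Set.infinite_univ (fun x _ => ⟨huniv _, huniv _⟩) hfin

end Aux

/-- for a strongly `Σₖᵖ`-immune `A`, the disjoint union `A ⊕ A` is
infinite and h-P-m-reducible to `A` but not strongly `Σₖᵖ`-immune. -/
theorem stmt5 (k : ℕ) (hk : 1 ≤ k) (A : Set Str) (hA : StronglySigmaImmune k A) :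
    ({z : Str | ∃ x ∈ A, z = x ++ [false]} ∪ {z : Str | ∃ x ∈ A, z = x ++ [true]}).Infinite ∧
    HPmRed ({z : Str | ∃ x ∈ A, z = x ++ [false]} ∪ {z : Str | ∃ x ∈ A, z = x ++ [true]}) A ∧
    ¬ StronglySigmaImmune k
      ({z : Str | ∃ x ∈ A, z = x ++ [false]} ∪ {z : Str | ∃ x ∈ A, z = x ++ [true]}) := by
  obtain ⟨w, hw⟩ := Aux.compl_ne k A hA
  have hAinf : Infinite ↥A := hA.1.to_subtype
  refine ⟨?_, ?_, ?_⟩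
  · apply Set.infinite_of_injective_forall_mem (f := fun x : ↥A => (x : Str) ++ [false])
    · intro a b hab
      exact Subtype.ext (by simpa using hab)
    · intro a
      exact Or.inl ⟨a, a.2, rfl⟩
  · refine ⟨fun z => if z = [] then w else z.dropLast, ⟨Aux.M1computes w⟩,
      ⟨Polynomial.X + 1, fun x => ?_⟩, fun x => ?_⟩
    · show x.length ≤ Polynomial.eval
          (List.length (if x = [] then w else x.dropLast)) (Polynomial.X + 1)
      by_cases hx : x = []
      · subst hx; simp
      · rw [if_neg hx]
        have h1 : 1 ≤ x.length := List.length_pos_iff.mpr hx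
        simp [List.length_dropLast]
        omega
    · show x ∈ _ ↔ (if x = [] then w else x.dropLast) ∈ A
      by_cases hx : x = []
      · subst hx
        rw [if_pos rfl]
        exact iff_of_false (Aux.nil_not_AA A) hw
      · rw [if_neg hx]
        exact Aux.mem_AA_iff A x hx
  · rintro ⟨-, hstr⟩
    have hq : QuasiRed k Aux.qrf
        ({z : Str | ∃ x ∈ A, z = x ++ [false]} ∪ {z : Str | ∃ x ∈ A, z = x ++ [true]})
        {v : Str | v.reverse ∈ A} := by
      refine ⟨Aux.qrf_SV k, Aux.qrf_dom_inf, fun x y hxy => ?_⟩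
      have hx := Aux.qrf_ne x y hxy
      rw [Aux.qrf_val x y hxy]
      rw [Aux.mem_AA_iff A x hx]
      simp
    have hfin := hstr {v : Str | v.reverse ∈ A} Aux.qrf hq
    exact Aux.col_inf _ A hA.1 (fun x hx => ⟨Or.inl ⟨x, hx, rfl⟩, Or.inr ⟨x, hx, rfl⟩⟩) hfin
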